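/- arXiv:2005.04168 — 6 statements merged into one kernel-verified Lean document; each statement's English description precedes it below -/
import Mathlib

section
/- Lemma (Equivalence of C-EP and EP in the limit of small learning rate). Assume Φ : ℝⁿ × ℝᵖ → ℝ is twice continuously differentiable and ℓ : ℝⁿ → ℝ is continuously differentiable, fix θ ∈ ℝᵖ, a steady state s_* = ∇_sΦ(s_*, θ), and β > 0. Then for every t ≥ 0, as η → 0⁺ one has s_t^{β,η} → s_t^β and θ_t^{β,η} → θ, and consequently lim_{η→0⁺} Δ_s^{C-EP}(β, η, t) = Δ_s^{EP}(β, t) and lim_{η→0⁺} Δ_θ^{C-EP}(β, η, t) = Δ_θ^{EP}(β, t). -/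
open Filter Topology

variable {n p : ℕ}
local notation "𝕊" => EuclideanSpace ℝ (Fin n)
local notation "𝕋" => EuclideanSpace ℝ (Fin p)

lemma grad_fst_cont (Φ : 𝕊 → 𝕋 → ℝ)
    (hΦ : ContDiff ℝ 2 (fun q : 𝕊 × 𝕋 => Φ q.1 q.2)) :
    Continuous (fun q : 𝕊 × 𝕋 => gradient (fun s => Φ s q.2) q.1) := by
  have hdiff : Differentiable ℝ (fun q : 𝕊 × 𝕋 => Φ q.1 q.2) :=
    hΦ.differentiable (by norm_num)
  have key : ∀ q : 𝕊 × 𝕋, gradient (fun s => Φ s q.2) q.1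
      = (InnerProductSpace.toDual ℝ 𝕊).symm
        ((fderiv ℝ (fun q : 𝕊 × 𝕋 => Φ q.1 q.2) q).comp (ContinuousLinearMap.inl ℝ 𝕊 𝕋)) := by
    intro q
    have h1 : HasFDerivAt (fun s : 𝕊 => Φ s q.2)
        ((fderiv ℝ (fun q : 𝕊 × 𝕋 => Φ q.1 q.2) q).comp (ContinuousLinearMap.inl ℝ 𝕊 𝕋)) q.1 := by
      have := ((hdiff (q.1, q.2)).hasFDerivAt).comp q.1 (hasFDerivAt_prodMk_left (𝕜 := ℝ) q.1 q.2)
      exact this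
    rw [gradient, h1.fderiv]
  rw [show (fun q : 𝕊 × 𝕋 => gradient (fun s => Φ s q.2) q.1) = _ from funext key]
  exact (InnerProductSpace.toDual ℝ 𝕊).symm.continuous.comp
    ((hΦ.continuous_fderiv (by norm_num)).clm_comp continuous_const)

lemma grad_snd_cont (Φ : 𝕊 → 𝕋 → ℝ)
    (hΦ : ContDiff ℝ 2 (fun q : 𝕊 × 𝕋 => Φ q.1 q.2)) :
    Continuous (fun q : 𝕊 × 𝕋 => gradient (fun θ' => Φ q.1 θ') q.2) := by
  have hdiff : Differentiable ℝ (fun q : 𝕊 × 𝕋 => Φ q.1 q.2) :=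
    hΦ.differentiable (by norm_num)
  have key : ∀ q : 𝕊 × 𝕋, gradient (fun θ' => Φ q.1 θ') q.2
      = (InnerProductSpace.toDual ℝ 𝕋).symm
        ((fderiv ℝ (fun q : 𝕊 × 𝕋 => Φ q.1 q.2) q).comp (ContinuousLinearMap.inr ℝ 𝕊 𝕋)) := by
    intro q
    have h1 : HasFDerivAt (fun y : 𝕋 => Φ q.1 y)
        ((fderiv ℝ (fun q : 𝕊 × 𝕋 => Φ q.1 q.2) q).comp (ContinuousLinearMap.inr ℝ 𝕊 𝕋)) q.2 := by
      have := ((hdiff (q.1, q.2)).hasFDerivAt).comp q.2 (hasFDerivAt_prodMk_right (𝕜 := ℝ) q.1 q.2)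
      exact this
    rw [gradient, h1.fderiv]
  rw [show (fun q : 𝕊 × 𝕋 => gradient (fun θ' => Φ q.1 θ') q.2) = _ from funext key]
  exact (InnerProductSpace.toDual ℝ 𝕋).symm.continuous.comp
    ((hΦ.continuous_fderiv (by norm_num)).clm_comp continuous_const)

lemma grad_l_cont (ℓ : 𝕊 → ℝ) (hℓ : ContDiff ℝ 1 ℓ) : Continuous (gradient ℓ) := by
  have : gradient ℓ = fun x => (InnerProductSpace.toDual ℝ 𝕊).symm (fderiv ℝ ℓ x) := rfl
  rw [this]
  exact (InnerProductSpace.toDual ℝ 𝕊).symm.continuous.comp (hℓ.continuous_fderiv one_ne_zero)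

set_option maxHeartbeats 1600000 in
/-- **Lemma (Equivalence of C-EP and EP in the limit of small learning rate).**
For fixed β > 0, as η → 0⁺ the C-EP trajectory converges pointwise to the EP trajectory
(with frozen parameter θ), and the C-EP normalized updates converge to those of EP. -/
theorem cep_eq_ep_small_lr
    (Φ : 𝕊 → 𝕋 → ℝ) (ℓ : 𝕊 → ℝ)
    (hΦ : ContDiff ℝ 2 (fun q : 𝕊 × 𝕋 => Φ q.1 q.2))
    (hℓ : ContDiff ℝ 1 ℓ)
    (θ : 𝕋) (sstar : 𝕊)
    (hfix : sstar = gradient (fun s => Φ s θ) sstar)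
    (β : ℝ) (hβ : 0 < β)
    -- EP second-phase trajectory
    (sEP : ℕ → 𝕊)
    (hsEP0 : sEP 0 = sstar)
    (hsEPrec : ∀ t, sEP (t+1) = gradient (fun s => Φ s θ) (sEP t) - β • gradient ℓ (sEP t))
    -- C-EP second-phase trajectory
    (St : ℝ → ℕ → 𝕊) (Tt : ℝ → ℕ → 𝕋)
    (hS0 : ∀ η, St η 0 = sstar)
    (hT0 : ∀ η, Tt η 0 = θ)
    (hSrec : ∀ η t, St η (t+1)
      = gradient (fun s => Φ s (Tt η t)) (St η t) - β • gradient ℓ (St η t))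
    (hTrec : ∀ η t, Tt η (t+1)
      = Tt η t + (η / β) • (gradient (fun θ' => Φ (St η (t+1)) θ') (Tt η t)
          - gradient (fun θ' => Φ (St η t) θ') (Tt η t)))
    (t : ℕ) :
    Tendsto (fun η => St η t) (𝓝[>] (0:ℝ)) (𝓝 (sEP t))
    ∧ Tendsto (fun η => Tt η t) (𝓝[>] (0:ℝ)) (𝓝 θ)
    ∧ Tendsto (fun η => β⁻¹ • (St η (t+1) - St η t)) (𝓝[>] (0:ℝ))
        (𝓝 (β⁻¹ • (sEP (t+1) - sEP t)))
    ∧ Tendsto (fun η => η⁻¹ • (Tt η (t+1) - Tt η t)) (𝓝[>] (0:ℝ))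
        (𝓝 (β⁻¹ • (gradient (fun θ' => Φ (sEP (t+1)) θ') θ
            - gradient (fun θ' => Φ (sEP t) θ') θ))) := by
  have HG := grad_fst_cont Φ hΦ
  have HH := grad_snd_cont Φ hΦ
  have HL := grad_l_cont ℓ hℓ
  -- limit of η/β is 0
  have hηβ : Tendsto (fun η : ℝ => η / β) (𝓝[>] (0:ℝ)) (𝓝 0) := by
    have : Tendsto (fun η : ℝ => η / β) (𝓝 (0:ℝ)) (𝓝 (0 / β)) :=
      (continuous_id.div_const β).tendsto 0
    simpa using this.mono_left nhdsWithin_le_nhds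
  -- main induction
  have main : ∀ t, Tendsto (fun η => St η t) (𝓝[>] (0:ℝ)) (𝓝 (sEP t))
      ∧ Tendsto (fun η => Tt η t) (𝓝[>] (0:ℝ)) (𝓝 θ) := by
    intro t
    induction t with
    | zero =>
      constructor
      · simpa [hS0, hsEP0] using (tendsto_const_nhds : Tendsto (fun _ : ℝ => sstar) _ _)
      · simpa [hT0] using (tendsto_const_nhds : Tendsto (fun _ : ℝ => θ) _ _)
    | succ t ih =>
      obtain ⟨ihS, ihT⟩ := ih
      have hPair : Tendsto (fun η => (St η t, Tt η t)) (𝓝[>] (0:ℝ)) (𝓝 (sEP t, θ)) :=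
        ihS.prodMk_nhds ihT
      have hSnext : Tendsto (fun η => St η (t+1)) (𝓝[>] (0:ℝ)) (𝓝 (sEP (t+1))) := by
        have h1 : Tendsto (fun η => gradient (fun s => Φ s (Tt η t)) (St η t)) (𝓝[>] (0:ℝ))
            (𝓝 (gradient (fun s => Φ s θ) (sEP t))) :=
          (HG.tendsto (sEP t, θ)).comp hPair
        have h2 : Tendsto (fun η => β • gradient ℓ (St η t)) (𝓝[>] (0:ℝ))
            (𝓝 (β • gradient ℓ (sEP t))) :=
          ((HL.tendsto (sEP t)).comp ihS).const_smul β
        have := h1.sub h2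
        simp only [← hSrec, ← hsEPrec] at this
        exact this
      refine ⟨hSnext, ?_⟩
      have hPair' : Tendsto (fun η => (St η (t+1), Tt η t)) (𝓝[>] (0:ℝ)) (𝓝 (sEP (t+1), θ)) :=
        hSnext.prodMk_nhds ihT
      have hD : Tendsto (fun η => gradient (fun θ' => Φ (St η (t+1)) θ') (Tt η t)
            - gradient (fun θ' => Φ (St η t) θ') (Tt η t)) (𝓝[>] (0:ℝ))
          (𝓝 (gradient (fun θ' => Φ (sEP (t+1)) θ') θ
            - gradient (fun θ' => Φ (sEP t) θ') θ)) :=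
        ((HH.tendsto (sEP (t+1), θ)).comp hPair').sub ((HH.tendsto (sEP t, θ)).comp hPair)
      have hzero := hηβ.smul hD
      rw [zero_smul] at hzero
      have := ihT.add hzero
      rw [add_zero] at this
      simp only [← hTrec] at this
      exact this
  refine ⟨(main t).1, (main t).2, ?_, ?_⟩
  · exact (((main (t+1)).1.sub (main t).1).const_smul β⁻¹)
  · have hD : Tendsto (fun η => gradient (fun θ' => Φ (St η (t+1)) θ') (Tt η t)
          - gradient (fun θ' => Φ (St η t) θ') (Tt η t)) (𝓝[>] (0:ℝ))
        (𝓝 (gradient (fun θ' => Φ (sEP (t+1)) θ') θ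
          - gradient (fun θ' => Φ (sEP t) θ') θ)) :=
      ((HH.tendsto (sEP (t+1), θ)).comp ((main (t+1)).1.prodMk_nhds (main t).2)).sub
        ((HH.tendsto (sEP t, θ)).comp ((main t).1.prodMk_nhds (main t).2))
    have heq : ∀ η ∈ Set.Ioi (0:ℝ), β⁻¹ • (gradient (fun θ' => Φ (St η (t+1)) θ') (Tt η t)
          - gradient (fun θ' => Φ (St η t) θ') (Tt η t))
        = η⁻¹ • (Tt η (t+1) - Tt η t) := by
      intro η hη
      rw [hTrec η t]
      rw [add_sub_cancel_left, smul_smul]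
      congr 1
      have hη' : (0:ℝ) < η := hη
      field_simp
    refine (hD.const_smul β⁻¹).congr' ?_
    exact eventually_nhdsWithin_of_forall heq
end

section
/- Lemma (Equivalence of BPTT and RBP). Let F : ℝⁿ × ℝᵖ → ℝⁿ be continuously differentiable, ℓ : ℝⁿ → ℝ be differentiable, and fix θ ∈ ℝᵖ. Let s_0, …, s_T be a trajectory (s_{k+1} = F(s_k, θ)) and suppose there exists 0 < K ≤ T with s_{T−K} = s_{T−K+1} = … = s_T = s_*. Then for every 0 ≤ t ≤ K the gradient at s_{T−t} of the map s ↦ ℓ(G_θ^{∘t}(s)) equals ∇_s^{RBP}(t) = ((D_sF(s_*, θ))ᵀ)ᵗ ∇ℓ(s_*), and for every 1 ≤ t ≤ K the gradient at θ of the map θ' ↦ ℓ(G_θ^{∘(t−1)}(F(s_{T−t}, θ'))) equals ∇_θ^{RBP}(t) = (D_θF(s_*, θ))ᵀ ∇_s^{RBP}(t−1). -/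
open Filter Topology

variable {n p : ℕ}
local notation "𝕊" => EuclideanSpace ℝ (Fin n)
local notation "𝕋" => EuclideanSpace ℝ (Fin p)

open ContinuousLinearMap in
lemma grad_comp_aux {E F : Type*} [NormedAddCommGroup E] [InnerProductSpace ℝ E] [CompleteSpace E]
    [NormedAddCommGroup F] [InnerProductSpace ℝ F] [CompleteSpace F]
    (f : E → F) (g : F → ℝ) (x : E) (hf : DifferentiableAt ℝ f x)
    (hg : DifferentiableAt ℝ g (f x)) :
    gradient (fun y => g (f y)) x = adjoint (fderiv ℝ f x) (gradient g (f x)) := by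
  apply ext_inner_right ℝ
  intro v
  have h1 : (inner ℝ (gradient (fun y => g (f y)) x) v : ℝ)
      = fderiv ℝ (fun y => g (f y)) x v := by
    simp [gradient, InnerProductSpace.toDual_symm_apply]
  have h2 : (inner ℝ (gradient g (f x)) (fderiv ℝ f x v) : ℝ)
      = fderiv ℝ g (f x) (fderiv ℝ f x v) := by
    simp [gradient, InnerProductSpace.toDual_symm_apply]
  rw [h1, adjoint_inner_left, h2,
    show (fun y => g (f y)) = g ∘ f from rfl, fderiv_comp x hg hf]
  rfl

open ContinuousLinearMap in
lemma fderiv_iterate_fixed {E : Type*} [NormedAddCommGroup E] [NormedSpace ℝ E]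
    (G : E → E) (hG : Differentiable ℝ G) (x : E) (hx : G x = x) (t : ℕ) :
    fderiv ℝ (G^[t]) x = (fderiv ℝ G x) ^ t := by
  induction t with
  | zero => simp [fderiv_id']; rfl
  | succ t ih =>
    rw [Function.iterate_succ', pow_succ']
    rw [fderiv_comp x (hG.differentiableAt) ((hG.iterate t).differentiableAt),
      Function.iterate_fixed hx, ih]
    rfl

/-- **Lemma (Equivalence of BPTT and RBP).** Along a trajectory that has settled at the
steady state `s⋆` for its last K steps, the first K BPTT gradients coincide with the
RBP gradients. -/
theorem bptt_eq_rbp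
    (F : 𝕊 → 𝕋 → 𝕊) (ℓ : 𝕊 → ℝ)
    (hF : ContDiff ℝ 1 (fun q : 𝕊 × 𝕋 => F q.1 q.2))
    (hℓ : Differentiable ℝ ℓ)
    (θ : 𝕋) (T K : ℕ) (hK : 0 < K) (hKT : K ≤ T)
    (s : ℕ → 𝕊) (htraj : ∀ k < T, s (k+1) = F (s k) θ)
    (sstar : 𝕊) (hsteady : ∀ k, T - K ≤ k → k ≤ T → s k = sstar) :
    (∀ t ≤ K,
      gradient (fun x => ℓ ((fun x' => F x' θ)^[t] x)) (s (T - t))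
        = ((ContinuousLinearMap.adjoint (fderiv ℝ (fun x => F x θ) sstar)) ^ t)
            (gradient ℓ sstar))
    ∧ (∀ t, 1 ≤ t → t ≤ K →
      gradient (fun θ' => ℓ ((fun x' => F x' θ)^[t-1] (F (s (T - t)) θ'))) θ
        = ContinuousLinearMap.adjoint (fderiv ℝ (fun θ' => F sstar θ') θ)
            (((ContinuousLinearMap.adjoint (fderiv ℝ (fun x => F x θ) sstar)) ^ (t-1))
              (gradient ℓ sstar))) := by
  have hFd : Differentiable ℝ (fun q : 𝕊 × 𝕋 => F q.1 q.2) := hF.differentiable one_ne_zero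
  set G : 𝕊 → 𝕊 := fun x => F x θ with hGdef
  have hGd : Differentiable ℝ G := fun x =>
    by have h := (hFd (x, θ)).comp x (((differentiableAt_id (𝕜 := ℝ) (x := x)).prodMk (differentiableAt_const θ))); exact h
  have hsT : ∀ t ≤ K, s (T - t) = sstar := fun t ht =>
    hsteady _ (Nat.sub_le_sub_left ht T) (Nat.sub_le T t)
  have hfix : G sstar = sstar := by
    have h1 : T - K < T := Nat.sub_lt (lt_of_lt_of_le hK hKT) hK
    have h2 := htraj (T - K) h1
    have h3 : s (T - K) = sstar := hsteady _ le_rfl (Nat.sub_le T K)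
    have h4 : s (T - K + 1) = sstar := hsteady _ (Nat.le_succ _) (by omega)
    rw [h3, h4] at h2
    exact h2.symm
  set A := fderiv ℝ G sstar with hA
  have key : ∀ t : ℕ, gradient (fun x => ℓ (G^[t] x)) sstar
      = ((ContinuousLinearMap.adjoint A) ^ t) (gradient ℓ sstar) := by
    intro t
    rw [grad_comp_aux (G^[t]) ℓ sstar ((hGd.iterate t).differentiableAt)
      (by rw [Function.iterate_fixed hfix]; exact (hℓ _)),
      Function.iterate_fixed hfix, fderiv_iterate_fixed G hGd sstar hfix]
    congr 1
    rw [← ContinuousLinearMap.star_eq_adjoint, ← ContinuousLinearMap.star_eq_adjoint, star_pow]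
  constructor
  · intro t ht
    rw [hsT t ht]
    exact key t
  · intro t ht1 htK
    rw [hsT t htK]
    have hFθd : Differentiable ℝ (fun θ' => F sstar θ') := fun x =>
      (hFd (sstar, x)).comp x ((differentiableAt_const sstar).prodMk differentiableAt_id)
    have := grad_comp_aux (fun θ' => F sstar θ') (fun x => ℓ (G^[t-1] x)) θ
      (hFθd θ) (by
        show DifferentiableAt ℝ _ (F sstar θ)
        have : F sstar θ = sstar := hfix
        rw [this]
        exact ((hℓ.comp (hGd.iterate (t-1))) _))
    rw [show (fun θ' => ℓ (G^[t-1] (F sstar θ'))) =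
      (fun θ' => (fun x => ℓ (G^[t-1] x)) ((fun θ' => F sstar θ') θ')) from rfl, this]
    congr 1
    rw [show F sstar θ = sstar from hfix]
    exact key (t-1)
end

section
/- Proposition (RBP optimizes the steady-state loss). Let F : ℝⁿ × ℝᵖ → ℝⁿ be continuously differentiable and ℓ : ℝⁿ → ℝ differentiable. Suppose σ : ℝᵖ → ℝⁿ is differentiable at θ₀ and satisfies σ(θ) = F(σ(θ), θ) for all θ in a neighborhood of θ₀; set s_* = σ(θ₀), and assume the operator norm of D_sF(s_*, θ₀) is strictly less than 1. Then the series Σ_{t=1}^∞ ∇_θ^{RBP}(t) converges and equals the gradient at θ₀ of the steady-state loss θ ↦ ℓ(σ(θ)). -/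
open Filter Topology

variable {n p : ℕ}
local notation "𝕊" => EuclideanSpace ℝ (Fin n)
local notation "𝕋" => EuclideanSpace ℝ (Fin p)

/-- **Proposition (RBP optimizes the steady-state loss).** If `σ` is a differentiable
branch of steady states near `θ₀` and `‖DₛF(s⋆,θ₀)‖ < 1`, then the series
`Σ_{t≥1} ∇θᴿᴮᴾ(t) = Σ_{t≥0} (DθF(s⋆,θ₀))ᵀ ((DₛF(s⋆,θ₀))ᵀ)ᵗ ∇ℓ(s⋆)` converges to the
gradient at `θ₀` of the steady-state loss `θ ↦ ℓ(σ(θ))`. -/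
theorem rbp_optimizes_steady_state_loss
    (F : 𝕊 → 𝕋 → 𝕊) (ℓ : 𝕊 → ℝ)
    (hF : ContDiff ℝ 1 (fun q : 𝕊 × 𝕋 => F q.1 q.2))
    (hℓ : Differentiable ℝ ℓ)
    (θ₀ : 𝕋) (σ : 𝕋 → 𝕊)
    (hσdiff : DifferentiableAt ℝ σ θ₀)
    (hσfix : ∀ᶠ θ in 𝓝 θ₀, σ θ = F (σ θ) θ)
    (sstar : 𝕊) (hs : sstar = σ θ₀)
    (hnorm : ‖fderiv ℝ (fun x => F x θ₀) sstar‖ < 1) :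
    HasSum (fun t : ℕ =>
        ContinuousLinearMap.adjoint (fderiv ℝ (fun θ' => F sstar θ') θ₀)
          (((ContinuousLinearMap.adjoint (fderiv ℝ (fun x => F x θ₀) sstar)) ^ t)
            (gradient ℓ sstar)))
      (gradient (fun θ => ℓ (σ θ)) θ₀) := by
  classical
  set A := fderiv ℝ (fun x => F x θ₀) sstar with hA
  set B := fderiv ℝ (fun θ' => F sstar θ') θ₀ with hB
  set Dσ := fderiv ℝ σ θ₀ with hDσ
  set g := gradient ℓ sstar with hg
  -- derivative of full map
  have hFdiff : DifferentiableAt ℝ (fun q : 𝕊 × 𝕋 => F q.1 q.2) (sstar, θ₀) :=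
    (hF.differentiable one_ne_zero).differentiableAt
  set D := fderiv ℝ (fun q : 𝕊 × 𝕋 => F q.1 q.2) (sstar, θ₀) with hD
  -- partial derivatives
  have hAeq : A = D.comp (ContinuousLinearMap.inl ℝ 𝕊 𝕋) := by
    have h : HasFDerivAt (fun x : 𝕊 => F x θ₀) (D.comp (ContinuousLinearMap.inl ℝ 𝕊 𝕋)) sstar :=
      by have := HasFDerivAt.comp sstar hFdiff.hasFDerivAt (hasFDerivAt_prodMk_left (𝕜 := ℝ) sstar θ₀); exact this
    exact hA.trans h.fderiv
  have hBeq : B = D.comp (ContinuousLinearMap.inr ℝ 𝕊 𝕋) := by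
    have h : HasFDerivAt (fun θ' : 𝕋 => F sstar θ') (D.comp (ContinuousLinearMap.inr ℝ 𝕊 𝕋)) θ₀ :=
      HasFDerivAt.comp θ₀ hFdiff.hasFDerivAt (hasFDerivAt_prodMk_right sstar θ₀)
    exact hB.trans h.fderiv
  -- chain rule identity: Dσ = A ∘ Dσ + B
  have hchain : Dσ = A.comp Dσ + B := by
    have h1 : fderiv ℝ σ θ₀ = fderiv ℝ (fun θ => F (σ θ) θ) θ₀ :=
      Filter.EventuallyEq.fderiv_eq (hσfix : σ =ᶠ[𝓝 θ₀] fun θ => F (σ θ) θ)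
    have hF2 : HasFDerivAt (fun q : 𝕊 × 𝕋 => F q.1 q.2) D (σ θ₀, θ₀) := by
      rw [← hs]; exact hFdiff.hasFDerivAt
    have hD2 : HasFDerivAt ((fun q : 𝕊 × 𝕋 => F q.1 q.2) ∘ fun θ => (σ θ, θ))
        (D.comp (Dσ.prod (ContinuousLinearMap.id ℝ 𝕋))) θ₀ :=
      HasFDerivAt.comp θ₀ hF2 (HasFDerivAt.prodMk hσdiff.hasFDerivAt (hasFDerivAt_id θ₀))
    have hD2' : HasFDerivAt (fun θ => F (σ θ) θ)
        (D.comp (Dσ.prod (ContinuousLinearMap.id ℝ 𝕋))) θ₀ := hD2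
    have h2 : Dσ = D.comp (Dσ.prod (ContinuousLinearMap.id ℝ 𝕋)) := h1.trans hD2'.fderiv
    ext v
    conv_lhs => rw [h2]
    have : ((Dσ v, v) : 𝕊 × 𝕋) = ((Dσ v, 0) : 𝕊 × 𝕋) + ((0 : 𝕊), v) := by simp
    simp only [ContinuousLinearMap.comp_apply, ContinuousLinearMap.prod_apply,
      ContinuousLinearMap.coe_id', id_eq, ContinuousLinearMap.add_apply, hAeq, hBeq,
      ContinuousLinearMap.inl_apply, ContinuousLinearMap.inr_apply]
    rw [this, map_add]
  -- adjoint identity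
  have hA' : ‖ContinuousLinearMap.adjoint A‖ < 1 := by
    rwa [show ‖ContinuousLinearMap.adjoint A‖ = ‖A‖ from
      (ContinuousLinearMap.adjoint : (𝕊 →L[ℝ] 𝕊) ≃ₗᵢ⋆[ℝ] (𝕊 →L[ℝ] 𝕊)).norm_map A]
  set A' := ContinuousLinearMap.adjoint A with hA'def
  -- geometric series of operators
  have hsum : HasSum (fun t : ℕ => A' ^ t) (Ring.inverse (1 - A')) :=
    hasSum_geom_series_inverse A' hA'
  have hsumg : HasSum (fun t : ℕ => (A' ^ t) g) (Ring.inverse (1 - A') g) := by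
    have := hsum.mapL (ContinuousLinearMap.apply ℝ 𝕊 g)
    simpa using this
  -- identify limit
  have hunit : (1 - A') * Ring.inverse (1 - A') = 1 := by
    rw [← geom_series_eq_inverse A' hA']
    exact mul_neg_geom_series A' hA'
  -- Dσ† = B† ∘ inverse... show B† (Ring.inverse (1-A') g) = Dσ† g
  have hadj : (ContinuousLinearMap.adjoint Dσ).comp (1 - A') = ContinuousLinearMap.adjoint B := by
    have h1 : (ContinuousLinearMap.id ℝ 𝕊 - A).comp Dσ = B := by
      have hS : A.comp Dσ = Dσ - B := by rw [eq_sub_iff_add_eq]; exact hchain.symm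
      ext v
      have hv : A (Dσ v) = Dσ v - B v := by
        have := congrArg (fun T : 𝕋 →L[ℝ] 𝕊 => T v) hS
        simpa using this
      simp [ContinuousLinearMap.sub_apply, hv]
    calc (ContinuousLinearMap.adjoint Dσ).comp (1 - A')
        = ContinuousLinearMap.adjoint ((ContinuousLinearMap.id ℝ 𝕊 - A).comp Dσ) := by
          rw [ContinuousLinearMap.adjoint_comp]
          congr 1
          rw [map_sub, ContinuousLinearMap.adjoint_id]
          rfl
      _ = ContinuousLinearMap.adjoint B := by rw [h1]
  have hkey : ContinuousLinearMap.adjoint B (Ring.inverse (1 - A') g)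
      = ContinuousLinearMap.adjoint Dσ g := by
    rw [← hadj]
    have : (1 - A') (Ring.inverse (1 - A') g) = g := by
      have := congrArg (fun T : 𝕊 →L[ℝ] 𝕊 => T g) hunit
      simpa [ContinuousLinearMap.mul_apply] using this
    simp only [ContinuousLinearMap.comp_apply, this]
  -- gradient of composition
  have hgrad : gradient (fun θ => ℓ (σ θ)) θ₀ = ContinuousLinearMap.adjoint Dσ g := by
    have hcomp : fderiv ℝ (fun θ => ℓ (σ θ)) θ₀ = (fderiv ℝ ℓ sstar).comp Dσ := by
      rw [hs]; exact fderiv_comp θ₀ (hℓ.differentiableAt) hσdiff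
    apply ext_inner_right ℝ
    intro v
    rw [gradient, InnerProductSpace.toDual_symm_apply, hcomp,
      ContinuousLinearMap.adjoint_inner_left, hg, gradient,
      InnerProductSpace.toDual_symm_apply]
    rfl
  rw [hgrad, ← hkey]
  exact hsumg.mapL (ContinuousLinearMap.adjoint B)
end

section
/- The total C-EP weight update recovers the EP update in the small-learning-rate limit. Assume Φ : ℝⁿ × ℝᵖ → ℝ is twice continuously differentiable and ℓ : ℝⁿ → ℝ is continuously differentiable, fix θ ∈ ℝᵖ, a steady state s_* = ∇_sΦ(s_*, θ), β > 0 and K ≥ 1. Then lim_{η→0⁺} (θ_K^{β,η} − θ)/η = Σ_{t=0}^{K−1} Δ_θ^{EP}(β, t) = (1/β)(∇_θΦ(s_K^β, θ) − ∇_θΦ(s_*, θ)). -/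
open Filter Topology

variable {n p : ℕ}
local notation "𝕊" => EuclideanSpace ℝ (Fin n)
local notation "𝕋" => EuclideanSpace ℝ (Fin p)

/-- **The total C-EP weight update recovers the EP update in the small-learning-rate
limit:** `lim_{η→0⁺} (θ_K^{β,η} − θ)/η = Σ_{t<K} Δθᴱᴾ(β,t)
= (1/β)(∇θΦ(s_Kᵝ,θ) − ∇θΦ(s⋆,θ))`. -/
theorem cep_total_update_recovers_ep
    (Φ : 𝕊 → 𝕋 → ℝ) (ℓ : 𝕊 → ℝ)
    (hΦ : ContDiff ℝ 2 (fun q : 𝕊 × 𝕋 => Φ q.1 q.2))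
    (hℓ : ContDiff ℝ 1 ℓ)
    (θ : 𝕋) (sstar : 𝕊)
    (hfix : sstar = gradient (fun s => Φ s θ) sstar)
    (β : ℝ) (hβ : 0 < β) (K : ℕ) (hK : 1 ≤ K)
    -- EP second-phase trajectory
    (sEP : ℕ → 𝕊)
    (hsEP0 : sEP 0 = sstar)
    (hsEPrec : ∀ t, sEP (t+1) = gradient (fun s => Φ s θ) (sEP t) - β • gradient ℓ (sEP t))
    -- C-EP second-phase trajectory
    (St : ℝ → ℕ → 𝕊) (Tt : ℝ → ℕ → 𝕋)
    (hS0 : ∀ η, St η 0 = sstar)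
    (hT0 : ∀ η, Tt η 0 = θ)
    (hSrec : ∀ η t, St η (t+1)
      = gradient (fun s => Φ s (Tt η t)) (St η t) - β • gradient ℓ (St η t))
    (hTrec : ∀ η t, Tt η (t+1)
      = Tt η t + (η / β) • (gradient (fun θ' => Φ (St η (t+1)) θ') (Tt η t)
          - gradient (fun θ' => Φ (St η t) θ') (Tt η t))) :
    Tendsto (fun η => η⁻¹ • (Tt η K - θ)) (𝓝[>] (0:ℝ))
      (𝓝 (∑ t ∈ Finset.range K,
        β⁻¹ • (gradient (fun θ' => Φ (sEP (t+1)) θ') θ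
          - gradient (fun θ' => Φ (sEP t) θ') θ)))
    ∧ (∑ t ∈ Finset.range K,
        β⁻¹ • (gradient (fun θ' => Φ (sEP (t+1)) θ') θ
          - gradient (fun θ' => Φ (sEP t) θ') θ))
      = β⁻¹ • (gradient (fun θ' => Φ (sEP K) θ') θ
          - gradient (fun θ' => Φ sstar θ') θ) := by
  classical
  set F : 𝕊 × 𝕋 → ℝ := fun q => Φ q.1 q.2 with hFdef
  have hFdiff : ∀ q : 𝕊 × 𝕋, HasFDerivAt F (fderiv ℝ F q) q := fun q =>
    ((hΦ.differentiable (by norm_num)) q).hasFDerivAt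
  have hfderiv_cont : Continuous (fun q => fderiv ℝ F q) :=
    hΦ.continuous_fderiv (by norm_num)
  -- partial gradients as continuous functions of the pair
  set gS : 𝕊 × 𝕋 → 𝕊 := fun q => gradient (fun s => Φ s q.2) q.1 with hgSdef
  set gT : 𝕊 × 𝕋 → 𝕋 := fun q => gradient (fun θ' => Φ q.1 θ') q.2 with hgTdef
  have hgS_eq : ∀ q : 𝕊 × 𝕋, gS q = (InnerProductSpace.toDual ℝ 𝕊).symm
      ((fderiv ℝ F q).comp (ContinuousLinearMap.inl ℝ 𝕊 𝕋)) := by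
    intro q
    have h1 : HasFDerivAt (fun s : 𝕊 => Φ s q.2)
        ((fderiv ℝ F q).comp (ContinuousLinearMap.inl ℝ 𝕊 𝕋)) q.1 :=
      (hFdiff q).comp (f := fun e : 𝕊 => (e, q.2)) q.1 (hasFDerivAt_prodMk_left q.1 q.2)
    show (InnerProductSpace.toDual ℝ 𝕊).symm (fderiv ℝ (fun s : 𝕊 => Φ s q.2) q.1) = _
    rw [h1.fderiv]
  have hgT_eq : ∀ q : 𝕊 × 𝕋, gT q = (InnerProductSpace.toDual ℝ 𝕋).symm
      ((fderiv ℝ F q).comp (ContinuousLinearMap.inr ℝ 𝕊 𝕋)) := by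
    intro q
    have h1 : HasFDerivAt (fun θ' : 𝕋 => Φ q.1 θ')
        ((fderiv ℝ F q).comp (ContinuousLinearMap.inr ℝ 𝕊 𝕋)) q.2 :=
      (hFdiff q).comp (f := fun e : 𝕋 => (q.1, e)) q.2 (hasFDerivAt_prodMk_right q.1 q.2)
    show (InnerProductSpace.toDual ℝ 𝕋).symm (fderiv ℝ (fun θ' : 𝕋 => Φ q.1 θ') q.2) = _
    rw [h1.fderiv]
  have hgScont : Continuous gS := by
    have : Continuous fun q : 𝕊 × 𝕋 =>
        (fderiv ℝ F q).comp (ContinuousLinearMap.inl ℝ 𝕊 𝕋) :=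
      hfderiv_cont.clm_comp continuous_const
    have := ((InnerProductSpace.toDual ℝ 𝕊).symm.continuous.comp this)
    exact this.congr fun q => (hgS_eq q).symm
  have hgTcont : Continuous gT := by
    have : Continuous fun q : 𝕊 × 𝕋 =>
        (fderiv ℝ F q).comp (ContinuousLinearMap.inr ℝ 𝕊 𝕋) :=
      hfderiv_cont.clm_comp continuous_const
    have := ((InnerProductSpace.toDual ℝ 𝕋).symm.continuous.comp this)
    exact this.congr fun q => (hgT_eq q).symm
  have hgl : Continuous fun s : 𝕊 => gradient ℓ s := by
    have : Continuous fun s : 𝕊 => fderiv ℝ ℓ s := hℓ.continuous_fderiv one_ne_zero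
    exact (InnerProductSpace.toDual ℝ 𝕊).symm.continuous.comp this
  -- joint continuity in η of the C-EP trajectory
  have hcont : ∀ t, Continuous (fun η => (St η t, Tt η t)) := by
    intro t
    induction t with
    | zero =>
      simp only [hS0, hT0]
      exact continuous_const
    | succ t ih =>
      have hS : Continuous fun η => St η (t + 1) := by
        have h1 : (fun η => St η (t + 1))
            = fun η => gS (St η t, Tt η t) - β • gradient ℓ (St η t) := by
          funext η; rw [hSrec]
        rw [h1]
        exact (hgScont.comp ih).sub
          ((hgl.comp (continuous_fst.comp ih)).const_smul β)
      have hT : Continuous fun η => Tt η (t + 1) := by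
        have h1 : (fun η => Tt η (t + 1))
            = fun η => Tt η t + (η / β) • (gT (St η (t + 1), Tt η t)
              - gT (St η t, Tt η t)) := by
          funext η; rw [hTrec]
        rw [h1]
        exact (continuous_snd.comp ih).add
          (((continuous_id.div_const β).smul
            ((hgTcont.comp (hS.prodMk (continuous_snd.comp ih))).sub
              (hgTcont.comp ih))))
      exact hS.prodMk hT
  -- values at η = 0
  have hzero : ∀ t, St 0 t = sEP t ∧ Tt 0 t = θ := by
    intro t
    induction t with
    | zero => exact ⟨by rw [hS0, hsEP0], hT0 0⟩
    | succ t ih =>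
      have hT : Tt 0 (t + 1) = θ := by
        rw [hTrec, zero_div, zero_smul, add_zero, ih.2]
      refine ⟨?_, hT⟩
      rw [hSrec, ih.1, ih.2, ← hsEPrec]
  -- telescoping of the θ-recursion
  have hTele : ∀ η t, Tt η t - θ = (η / β) • ∑ i ∈ Finset.range t,
      (gT (St η (i + 1), Tt η i) - gT (St η i, Tt η i)) := by
    intro η t
    induction t with
    | zero => simp [hT0]
    | succ t ih =>
      rw [Finset.sum_range_succ, smul_add, ← ih, hTrec]
      abel
  -- the continuous surrogate
  set G : ℝ → 𝕋 := fun η => ∑ t ∈ Finset.range K,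
    β⁻¹ • (gT (St η (t + 1), Tt η t) - gT (St η t, Tt η t)) with hGdef
  have hGcont : Continuous G := by
    apply continuous_finset_sum
    intro t _
    exact Continuous.const_smul
      (((hgTcont.comp ((continuous_fst.comp (hcont (t + 1))).prodMk
        (continuous_snd.comp (hcont t)))).sub (hgTcont.comp (hcont t)))) β⁻¹
  have hG0 : G 0 = ∑ t ∈ Finset.range K,
      β⁻¹ • (gradient (fun θ' => Φ (sEP (t+1)) θ') θ
        - gradient (fun θ' => Φ (sEP t) θ') θ) := by
    apply Finset.sum_congr rfl
    intro t _
    rw [hgTdef]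
    simp only [(hzero (t + 1)).1, (hzero (t + 1)).2, (hzero t).1, (hzero t).2]
  have hEq : ∀ η ∈ Set.Ioi (0 : ℝ), η⁻¹ • (Tt η K - θ) = G η := by
    intro η hη
    have hη' : η ≠ 0 := ne_of_gt hη
    rw [hTele η K, hGdef]
    rw [smul_smul, Finset.smul_sum]
    apply Finset.sum_congr rfl
    intro t _
    congr 1
    field_simp
  constructor
  · have h1 : Tendsto G (𝓝[>] (0 : ℝ)) (𝓝 (G 0)) :=
      (hGcont.tendsto 0).mono_left nhdsWithin_le_nhds
    rw [hG0] at h1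
    refine h1.congr' ?_
    filter_upwards [self_mem_nhdsWithin] with η hη
    exact (hEq η hη).symm
  · have := Finset.sum_range_sub (fun t => β⁻¹ • gradient (fun θ' => Φ (sEP t) θ') θ) K
    simp only [← smul_sub] at this ⊢
    rw [this, hsEP0]
end

section
/- Toy-model C-EP closed form. In the toy C-EP dynamics, if additionally 1 − η/(2β) + 2β ≠ 0, then for all t ≥ 0: s_t = (θ/(1 − η/(2β) + 2β)) · (1 − η/(2β) + 2β · (1/2)ᵗ (1 − 2β + η/(2β))ᵗ). -/
/-- **Toy-model C-EP closed form.** For the toy C-EP dynamics, if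
`1 − η/(2β) + 2β ≠ 0`, then
`s_t = (θ/(1 − η/(2β) + 2β)) (1 − η/(2β) + 2β (1/2)ᵗ (1 − 2β + η/(2β))ᵗ)`. -/
theorem toy_model_cep_closed_form (θ β η : ℝ) (hβ : 0 < β) (hη : 0 < η)
    (hden : 1 - η / (2*β) + 2*β ≠ 0)
    (s th : ℕ → ℝ)
    (hs0 : s 0 = θ) (hth0 : th 0 = θ)
    (hsrec : ∀ t, s (t+1) = (1/2 - β) * s t + th t / 2)
    (hthrec : ∀ t, th (t+1) = th t + (η / (2*β)) * (s (t+1) - s t)) :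
    ∀ t : ℕ, s t = θ / (1 - η / (2*β) + 2*β)
        * (1 - η / (2*β) + 2*β * (1/2)^t * (1 - 2*β + η / (2*β))^t) := by
  have hb : (2*β : ℝ) ≠ 0 := by positivity
  set a := η / (2*β) with ha
  have key : ∀ t, s t = θ / (1 - a + 2*β) * (1 - a + 2*β * ((1/2)*(1-2*β+a))^t) ∧
      th t = θ / (1 - a + 2*β) * ((1-a)*(1+2*β) + 2*β*a*((1/2)*(1-2*β+a))^t) := by
    intro t
    induction t with
    | zero =>
      constructor
      · rw [hs0]; field_simp
      · rw [hth0]; field_simp; ring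
    | succ t ih =>
      obtain ⟨ih1, ih2⟩ := ih
      constructor
      · rw [hsrec t, ih1, ih2]; field_simp; ring
      · rw [hthrec t, hsrec t, ih1, ih2]; field_simp; ring
  intro t
  rw [(key t).1, mul_pow]; ring
end

section
/- Toy-model C-EP normalized updates. In the toy C-EP dynamics, for all t ≥ 0: (θ_{t+1} − θ_t)/η = (1/2) · (s_{t+1} − s_t)/β, and (s_{t+1} − s_t)/β = −(θ/2ᵗ)(1 − 2β + η/(2β))ᵗ. In particular, lim_{β→0⁺} lim_{η→0⁺} (s_{t+1} − s_t)/β = −θ/2ᵗ and lim_{β→0⁺} lim_{η→0⁺} (θ_{t+1} − θ_t)/η = −θ/2^{t+1}. -/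
open Filter Topology

private lemma this_aux_gs (θ : ℝ) (t : ℕ) :
    Tendsto (fun β : ℝ => -(θ / 2^t) * (1 - 2*β)^t) (𝓝[>] (0:ℝ)) (𝓝 (-(θ / 2^t))) := by
  have hc : ContinuousAt (fun β : ℝ => -(θ / 2^t) * (1 - 2*β)^t) 0 := by fun_prop
  have h := hc.tendsto.mono_left (nhdsWithin_le_nhds (s := Set.Ioi (0:ℝ)))
  simpa using h

private lemma this_aux_gth (θ : ℝ) (t : ℕ) :
    Tendsto (fun β : ℝ => (1/2) * (-(θ / 2^t) * (1 - 2*β)^t)) (𝓝[>] (0:ℝ))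
      (𝓝 (-(θ / 2^(t+1)))) := by
  have hc : ContinuousAt (fun β : ℝ => (1/2) * (-(θ / 2^t) * (1 - 2*β)^t)) 0 := by fun_prop
  have h := hc.tendsto.mono_left (nhdsWithin_le_nhds (s := Set.Ioi (0:ℝ)))
  have e : (1/2) * (-(θ / 2^t) * (1 - 2*(0:ℝ))^t) = -(θ / 2^(t+1)) := by
    rw [pow_succ]; norm_num; ring
  exact e ▸ h

/-- **Toy-model C-EP normalized updates.** For the toy C-EP dynamics (as functions of β, η):
`(θ_{t+1} − θ_t)/η = (1/2)(s_{t+1} − s_t)/β` and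
`(s_{t+1} − s_t)/β = −(θ/2ᵗ)(1 − 2β + η/(2β))ᵗ`; in particular, the iterated limits
(η → 0⁺, then β → 0⁺) are `−θ/2ᵗ` and `−θ/2^{t+1}` respectively. -/
theorem toy_model_cep_updates (θ : ℝ)
    (s th : ℝ → ℝ → ℕ → ℝ)
    (hs0 : ∀ β η, s β η 0 = θ) (hth0 : ∀ β η, th β η 0 = θ)
    (hsrec : ∀ β η t, s β η (t+1) = (1/2 - β) * s β η t + th β η t / 2)
    (hthrec : ∀ β η t, th β η (t+1) = th β η t + (η / (2*β)) * (s β η (t+1) - s β η t))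
    (t : ℕ) :
    (∀ β η : ℝ, 0 < β → 0 < η →
      (th β η (t+1) - th β η t) / η = (1/2) * ((s β η (t+1) - s β η t) / β)
      ∧ (s β η (t+1) - s β η t) / β = -(θ / 2^t) * (1 - 2*β + η / (2*β))^t)
    ∧ (∃ gs : ℝ → ℝ,
        (∀ β > (0:ℝ), Tendsto (fun η => (s β η (t+1) - s β η t) / β)
            (𝓝[>] (0:ℝ)) (𝓝 (gs β)))
        ∧ Tendsto gs (𝓝[>] (0:ℝ)) (𝓝 (-(θ / 2^t))))
    ∧ (∃ gθ : ℝ → ℝ,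
        (∀ β > (0:ℝ), Tendsto (fun η => (th β η (t+1) - th β η t) / η)
            (𝓝[>] (0:ℝ)) (𝓝 (gθ β)))
        ∧ Tendsto gθ (𝓝[>] (0:ℝ)) (𝓝 (-(θ / 2^(t+1))))) := by
  -- closed form for the increment
  have key : ∀ β η : ℝ, β ≠ 0 → ∀ n : ℕ,
      s β η (n+1) - s β η n = -β*θ * ((1 - 2*β + η/(2*β))/2)^n := by
    intro β η hβ n
    induction n with
    | zero => simp [hsrec, hs0, hth0]; ring
    | succ n ih =>
      have hθd : th β η (n+1) - th β η n = (η/(2*β)) * (s β η (n+1) - s β η n) := by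
        rw [hthrec]; ring
      have : s β η (n+2) - s β η (n+1)
          = (1/2 - β) * (s β η (n+1) - s β η n) + (th β η (n+1) - th β η n)/2 := by
        rw [hsrec β η (n+1), hsrec β η n]; ring
      rw [this, hθd, ih]
      rw [pow_succ]
      generalize ((1 - 2*β + η/(2*β))/2)^n = X
      field_simp
      ring
  have part1 : ∀ β η : ℝ, 0 < β → 0 < η →
      (th β η (t+1) - th β η t) / η = (1/2) * ((s β η (t+1) - s β η t) / β)
      ∧ (s β η (t+1) - s β η t) / β = -(θ / 2^t) * (1 - 2*β + η / (2*β))^t := by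
    intro β η hβ hη
    have hβ' := hβ.ne'
    have hη' := hη.ne'
    constructor
    · have hθd : th β η (t+1) - th β η t = (η/(2*β)) * (s β η (t+1) - s β η t) := by
        rw [hthrec]; ring
      rw [hθd]; field_simp
    · rw [key β η hβ' t, div_pow]
      field_simp
  refine ⟨part1, ?_, ?_⟩
  · refine ⟨fun β => -(θ / 2^t) * (1 - 2*β)^t, ?_, ?_⟩
    · intro β hβ
      have h1 : Tendsto (fun η : ℝ => -(θ / 2^t) * (1 - 2*β + η/(2*β))^t)
          (𝓝[>] (0:ℝ)) (𝓝 (-(θ / 2^t) * (1 - 2*β)^t)) := by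
        have : ContinuousAt (fun η : ℝ => -(θ / 2^t) * (1 - 2*β + η/(2*β))^t) 0 := by
          fun_prop
        have h0 : -(θ / 2^t) * (1 - 2*β + 0/(2*β))^t = -(θ / 2^t) * (1 - 2*β)^t := by
          norm_num
        exact h0 ▸ (this.tendsto.mono_left nhdsWithin_le_nhds)
      refine h1.congr' ?_
      filter_upwards [self_mem_nhdsWithin] with η hη
      exact ((part1 β η hβ hη).2).symm
    · have h := this_aux_gs θ t
      exact h
  · refine ⟨fun β => (1/2) * (-(θ / 2^t) * (1 - 2*β)^t), ?_, ?_⟩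
    · intro β hβ
      have h1 : Tendsto (fun η : ℝ => (1/2) * (-(θ / 2^t) * (1 - 2*β + η/(2*β))^t))
          (𝓝[>] (0:ℝ)) (𝓝 ((1/2) * (-(θ / 2^t) * (1 - 2*β)^t))) := by
        have : ContinuousAt (fun η : ℝ => (1/2) * (-(θ / 2^t) * (1 - 2*β + η/(2*β))^t)) 0 := by
          fun_prop
        have h0 : (1/2) * (-(θ / 2^t) * (1 - 2*β + 0/(2*β))^t)
            = (1/2) * (-(θ / 2^t) * (1 - 2*β)^t) := by norm_num
        exact h0 ▸ this.tendsto.mono_left nhdsWithin_le_nhds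
      refine h1.congr' ?_
      filter_upwards [self_mem_nhdsWithin] with η hη
      rw [(part1 β η hβ hη).1, (part1 β η hβ hη).2]
    · exact this_aux_gth θ t
end
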